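/- Bretagnolle–Huber inequality: for any two probability measures P and Q on the same measurable space and any event E, P(E) + Q(Eᶜ) ≥ (1/2) exp(−KL(P‖Q)). -/

import Mathlib

open MeasureTheory Real
open scoped Classical

/-- Bretagnolle–Huber: for probability measures `P, Q` and any event `E`,
`P(E) + Q(Eᶜ) ≥ (1/2)·exp(−KL(P‖Q))`, where `KL(P‖Q) = ∫ log(dP/dQ) dP` when `P ≪ Q`
(with the log-likelihood ratio integrable) and `KL(P‖Q) = +∞` otherwise, the latter case
being encoded by `exp(−KL) = 0`. -/
theorem bretagnolle_huber
    {Ω : Type*} [MeasurableSpace Ω]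
    (P Q : Measure Ω) [IsProbabilityMeasure P] [IsProbabilityMeasure Q]
    (E : Set Ω) (hE : MeasurableSet E) :
    (P E).toReal + (Q Eᶜ).toReal ≥
      (1 / 2) *
        (if P ≪ Q ∧ Integrable (llr P Q) P then Real.exp (-(∫ x, llr P Q x ∂P)) else 0) := by
  by_cases h : P ≪ Q ∧ Integrable (llr P Q) P
  swap
  · rw [if_neg h, mul_zero, ge_iff_le]
    positivity
  rw [if_pos h]
  obtain ⟨hPQ, hint⟩ := h
  set G : Ω → ℝ := fun x ↦ (Q.rnDeriv P x).toReal with hG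
  have hGmeas : Measurable G := (Measure.measurable_rnDeriv Q P).ennreal_toReal
  have hGnn : ∀ x, 0 ≤ G x := fun x ↦ ENNReal.toReal_nonneg
  have hGint : Integrable G P := Measure.integrable_toReal_rnDeriv
  have hGle1 : ∫ x, G x ∂P ≤ 1 := by
    have := Measure.setIntegral_toReal_rnDeriv_le (μ := Q) (ν := P)
      (s := Set.univ) (measure_ne_top Q _)
    simpa [measure_univ] using this
  -- integrability of min and max
  have hminint : Integrable (fun x ↦ min (G x) 1) P := by
    refine hGint.mono' ((hGmeas.min measurable_const).aestronglyMeasurable) ?_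
    refine Filter.Eventually.of_forall fun x ↦ ?_
    rw [Real.norm_of_nonneg (le_min (hGnn x) zero_le_one)]
    exact min_le_left _ _
  have haddint : Integrable (fun x ↦ G x + 1) P := by
    simpa using hGint.add (integrable_const 1)
  have hmaxint : Integrable (fun x ↦ max (G x) 1) P := by
    refine haddint.mono'
      ((hGmeas.max measurable_const).aestronglyMeasurable) ?_
    refine Filter.Eventually.of_forall fun x ↦ ?_
    rw [Real.norm_of_nonneg (le_trans zero_le_one (le_max_right _ _))]
    exact max_le (le_add_of_nonneg_right zero_le_one) (le_add_of_nonneg_left (hGnn x))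
  -- min bound
  have hmin_le : ∫ x, min (G x) 1 ∂P ≤ (P E).toReal + (Q Eᶜ).toReal := by
    rw [← integral_add_compl hE hminint]
    gcongr
    · calc ∫ x in E, min (G x) 1 ∂P ≤ ∫ _x in E, (1 : ℝ) ∂P := by
            refine setIntegral_mono_on hminint.integrableOn (integrableOn_const ?_)
              hE fun x _ ↦ min_le_right _ _
            exact measure_ne_top P E
        _ = (P E).toReal := by simp; rfl
    · calc ∫ x in Eᶜ, min (G x) 1 ∂P ≤ ∫ x in Eᶜ, G x ∂P :=
            setIntegral_mono_on hminint.integrableOn hGint.integrableOn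
              hE.compl fun x _ ↦ min_le_left _ _
        _ ≤ (Q Eᶜ).toReal := Measure.setIntegral_toReal_rnDeriv_le (measure_ne_top Q _)
  -- max bound
  have hmax_le : ∫ x, max (G x) 1 ∂P ≤ 2 := by
    calc ∫ x, max (G x) 1 ∂P ≤ ∫ x, G x + 1 ∂P := by
          refine integral_mono hmaxint haddint fun x ↦ ?_
          exact max_le (le_add_of_nonneg_right zero_le_one) (le_add_of_nonneg_left (hGnn x))
      _ = (∫ x, G x ∂P) + 1 := by
          rw [integral_add hGint (integrable_const 1)]; simp
      _ ≤ 2 := by linarith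
  have hmin_nn : 0 ≤ ∫ x, min (G x) 1 ∂P :=
    integral_nonneg fun x ↦ le_min (hGnn x) zero_le_one
  have hmax_nn : 0 ≤ ∫ x, max (G x) 1 ∂P :=
    integral_nonneg fun x ↦ le_trans zero_le_one (le_max_right _ _)
  -- exp(-llr) = G a.e.
  have hexp : (fun x ↦ exp (- llr P Q x)) =ᵐ[P] G := exp_neg_llr hPQ
  have hsqrtG_ae : (fun x ↦ exp (-(llr P Q x) / 2)) =ᵐ[P] fun x ↦ Real.sqrt (G x) := by
    filter_upwards [hexp] with x hx
    rw [exp_half, hx]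
  have hsqrt_le : ∀ x, Real.sqrt (G x) ≤ max (G x) 1 := by
    intro x
    rcases le_total (G x) 1 with hx | hx
    · exact le_trans (Real.sqrt_le_one.mpr hx) (le_max_right _ _)
    · refine le_trans ?_ (le_max_left _ _)
      have hs := Real.sq_sqrt (le_trans zero_le_one hx)
      nlinarith [sq_nonneg (Real.sqrt (G x) - 1)]
  have hsqrtint : Integrable (fun x ↦ Real.sqrt (G x)) P := by
    refine hmaxint.mono' (hGmeas.sqrt.aestronglyMeasurable) ?_
    exact Filter.Eventually.of_forall fun x ↦ by
      rw [Real.norm_of_nonneg (Real.sqrt_nonneg _)]; exact hsqrt_le x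
  have hφint : Integrable (fun x ↦ -(llr P Q x) / 2) P := hint.neg.div_const 2
  -- Jensen's inequality
  have hjensen : exp (∫ x, -(llr P Q x) / 2 ∂P) ≤ ∫ x, Real.sqrt (G x) ∂P := by
    rw [← integral_congr_ae hsqrtG_ae]
    exact ConvexOn.map_integral_le (s := Set.univ) convexOn_exp
      continuous_exp.continuousOn isClosed_univ
      (Filter.Eventually.of_forall fun x ↦ Set.mem_univ _) hφint
      (hsqrtint.congr hsqrtG_ae.symm)
  have hKLint : ∫ x, -(llr P Q x) / 2 ∂P = -(∫ x, llr P Q x ∂P) / 2 := by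
    rw [integral_div, integral_neg]
  -- Cauchy-Schwarz
  have h22 : Real.HolderConjugate 2 2 := Real.holderConjugate_iff.2 ⟨one_lt_two, by norm_num⟩
  have hCS : ∫ x, Real.sqrt (G x) ∂P ≤
      Real.sqrt (∫ x, min (G x) 1 ∂P) * Real.sqrt (∫ x, max (G x) 1 ∂P) := by
    have hfmem : MemLp (fun x ↦ Real.sqrt (min (G x) 1)) (ENNReal.ofReal 2) P := by
      refine MemLp.mono_exponent (q := ⊤) ?_ le_top
      refine memLp_top_of_bound ((hGmeas.min measurable_const).sqrt.aestronglyMeasurable) 1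
        (Filter.Eventually.of_forall fun x ↦ ?_)
      rw [Real.norm_of_nonneg (Real.sqrt_nonneg _)]
      exact Real.sqrt_le_one.mpr (min_le_right _ _)
    have hgmem : MemLp (fun x ↦ Real.sqrt (max (G x) 1)) (ENNReal.ofReal 2) P := by
      have h2 : (ENNReal.ofReal 2) = 2 := by norm_num
      rw [h2, memLp_two_iff_integrable_sq
        ((hGmeas.max measurable_const).sqrt.aestronglyMeasurable)]
      refine hmaxint.congr (Filter.Eventually.of_forall fun x ↦ ?_)
      exact (Real.sq_sqrt (le_trans zero_le_one (le_max_right _ _))).symm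
    have key := integral_mul_le_Lp_mul_Lq_of_nonneg (μ := P) h22
      (Filter.Eventually.of_forall fun x ↦ Real.sqrt_nonneg (min (G x) 1))
      (Filter.Eventually.of_forall fun x ↦ Real.sqrt_nonneg (max (G x) 1)) hfmem hgmem
    have hlhs : ∀ x, Real.sqrt (min (G x) 1) * Real.sqrt (max (G x) 1) = Real.sqrt (G x) := by
      intro x
      rw [← Real.sqrt_mul (le_min (hGnn x) zero_le_one), min_mul_max, mul_one]
    have hsq : ∀ a : ℝ, 0 ≤ a → Real.sqrt a ^ (2 : ℝ) = a := by
      intro a ha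
      rw [show ((2:ℝ) = ((2:ℕ):ℝ)) by norm_num, Real.rpow_natCast, Real.sq_sqrt ha]
    calc ∫ x, Real.sqrt (G x) ∂P
        = ∫ x, Real.sqrt (min (G x) 1) * Real.sqrt (max (G x) 1) ∂P := by
          exact integral_congr_ae (Filter.Eventually.of_forall fun x ↦ (hlhs x).symm)
      _ ≤ (∫ x, Real.sqrt (min (G x) 1) ^ (2:ℝ) ∂P) ^ ((1:ℝ)/2) *
            (∫ x, Real.sqrt (max (G x) 1) ^ (2:ℝ) ∂P) ^ ((1:ℝ)/2) := key
      _ = Real.sqrt (∫ x, min (G x) 1 ∂P) * Real.sqrt (∫ x, max (G x) 1 ∂P) := by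
          rw [show (∫ x, Real.sqrt (min (G x) 1) ^ (2:ℝ) ∂P) = ∫ x, min (G x) 1 ∂P from
              integral_congr_ae (Filter.Eventually.of_forall fun x ↦
                hsq _ (le_min (hGnn x) zero_le_one)),
            show (∫ x, Real.sqrt (max (G x) 1) ^ (2:ℝ) ∂P) = ∫ x, max (G x) 1 ∂P from
              integral_congr_ae (Filter.Eventually.of_forall fun x ↦
                hsq _ (le_trans zero_le_one (le_max_right _ _))),
            Real.sqrt_eq_rpow, Real.sqrt_eq_rpow]
  -- combine
  set m := ∫ x, min (G x) 1 ∂P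
  set M := ∫ x, max (G x) 1 ∂P
  set S := ∫ x, Real.sqrt (G x) ∂P
  have hS_nn : 0 ≤ S := integral_nonneg fun x ↦ Real.sqrt_nonneg _
  have hexpKL : exp (-(∫ x, llr P Q x ∂P)) = exp (-(∫ x, llr P Q x ∂P) / 2) ^ 2 := by
    rw [exp_half, Real.sq_sqrt (exp_pos _).le]
  have hS2 : exp (-(∫ x, llr P Q x ∂P)) ≤ m * M := by
    rw [hexpKL, ← hKLint]
    calc exp (∫ x, -(llr P Q x) / 2 ∂P) ^ 2 ≤ S ^ 2 := by
          have := hjensen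
          nlinarith [exp_pos (∫ x, -(llr P Q x) / 2 ∂P)]
      _ ≤ (Real.sqrt m * Real.sqrt M) ^ 2 := by nlinarith [Real.sqrt_nonneg m, Real.sqrt_nonneg M]
      _ = m * M := by rw [mul_pow, Real.sq_sqrt hmin_nn, Real.sq_sqrt hmax_nn]
  have : exp (-(∫ x, llr P Q x ∂P)) ≤ 2 * m := by nlinarith
  rw [ge_iff_le]
  linarith
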